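/- If G is a connected, nonregular, nonbipartite graph of order n, diameter D, and maximum degree Δ, then Δ + μ_min(G) > 1/(n(D+1)) + 1/(μ(G)^{2D} · n). -/

import Mathlib

open Classical in
noncomputable def adjMat {V : Type*} [Fintype V] (G : SimpleGraph V) :
    Matrix V V ℝ :=
  Matrix.of fun i j => if G.Adj i j then 1 else 0

def IsAdjEigenvalue {V : Type*} [Fintype V] (A : Matrix V V ℝ) (μ : ℝ) : Prop :=
  ∃ x : V → ℝ, x ≠ 0 ∧ A.mulVec x = μ • x

def IsMaxAdjEigenvalue {V : Type*} [Fintype V] (A : Matrix V V ℝ) (μ : ℝ) : Prop :=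
  IsAdjEigenvalue A μ ∧ ∀ ν, IsAdjEigenvalue A ν → ν ≤ μ

def IsMinAdjEigenvalue {V : Type*} [Fintype V] (A : Matrix V V ℝ) (μ : ℝ) : Prop :=
  IsAdjEigenvalue A μ ∧ ∀ ν, IsAdjEigenvalue A ν → μ ≤ ν

open Matrix SimpleGraph Finset

variable {V : Type*} [Fintype V] [DecidableEq V] (G : SimpleGraph V) [DecidableRel G.Adj]

lemma adjMat_eq : adjMat G = G.adjMatrix ℝ := by
  ext i j
  simp [adjMat, SimpleGraph.adjMatrix]

lemma adjMat_isHermitian : (adjMat G).IsHermitian := by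
  rw [adjMat_eq]
  ext i j
  simp [SimpleGraph.adjMatrix, SimpleGraph.adj_comm]

set_option linter.unusedSectionVars false


lemma psd_of_le_eig {A : Matrix V V ℝ} (hA : A.IsHermitian) {μ : ℝ}
    (h : ∀ ν, IsAdjEigenvalue A ν → ν ≤ μ) :
    (μ • (1 : Matrix V V ℝ) - A).PosSemidef := by
  have hB : (μ • (1 : Matrix V V ℝ) - A).IsHermitian := by
    unfold Matrix.IsHermitian
    rw [Matrix.conjTranspose_sub, Matrix.conjTranspose_smul, Matrix.conjTranspose_one, hA.eq]
    simp
  apply hB.posSemidef_iff_eigenvalues_nonneg.mpr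
  intro i
  have hv := hB.mulVec_eigenvectorBasis i
  set v : V → ℝ := ⇑(hB.eigenvectorBasis i) with hvdef
  have hvne : v ≠ 0 := by
    intro h0
    have := hB.eigenvectorBasis.orthonormal.ne_zero i
    apply this
    ext j
    exact congrFun h0 j
  have hAv : A *ᵥ v = (μ - hB.eigenvalues i) • v := by
    have : (μ • (1 : Matrix V V ℝ) - A) *ᵥ v = μ • v - A *ᵥ v := by
      rw [Matrix.sub_mulVec, Matrix.smul_mulVec, Matrix.one_mulVec]
    rw [this] at hv
    have : A *ᵥ v = μ • v - hB.eigenvalues i • v := by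
      rw [← hv]; abel
    rw [this, sub_smul]
  have := h _ ⟨v, hvne, hAv⟩
  rw [Pi.zero_apply]; linarith

lemma adjMat_nonneg (i j : V) : 0 ≤ adjMat G i j := by
  rw [adjMat_eq]; simp [SimpleGraph.adjMatrix]; positivity

lemma adjMat_symm (i j : V) : adjMat G i j = adjMat G j i := by
  rw [adjMat_eq]; simp [SimpleGraph.adjMatrix_apply, SimpleGraph.adj_comm]

lemma adjMat_apply' (i j : V) : adjMat G i j = if G.Adj i j then 1 else 0 := by
  rw [adjMat_eq]; simp [SimpleGraph.adjMatrix_apply]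

lemma adjMat_rowsum (i : V) : ∑ j, adjMat G i j = (G.degree i : ℝ) := by
  rw [adjMat_eq]
  have := G.adjMatrix_mulVec_const_apply (α := ℝ) (a := 1) (v := i)
  simpa [Matrix.mulVec, dotProduct] using this

lemma quad_eq (A : Matrix V V ℝ) (x : V → ℝ) :
    x ⬝ᵥ (A *ᵥ x) = ∑ i, ∑ j, A i j * (x i * x j) := by
  simp only [dotProduct, Matrix.mulVec, dotProduct, Finset.mul_sum]
  congr 1; ext i; congr 1; ext j; ring

lemma psd_of_ge_eig {A : Matrix V V ℝ} (hA : A.IsHermitian) {ν : ℝ}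
    (h : ∀ β, IsAdjEigenvalue A β → ν ≤ β) :
    (A - ν • (1 : Matrix V V ℝ)).PosSemidef := by
  have hB : (A - ν • (1 : Matrix V V ℝ)).IsHermitian := by
    unfold Matrix.IsHermitian
    rw [Matrix.conjTranspose_sub, Matrix.conjTranspose_smul, Matrix.conjTranspose_one, hA.eq]
    simp
  apply hB.posSemidef_iff_eigenvalues_nonneg.mpr
  intro i
  have hv := hB.mulVec_eigenvectorBasis i
  set v : V → ℝ := ⇑(hB.eigenvectorBasis i) with hvdef
  have hvne : v ≠ 0 := by
    intro h0
    exact hB.eigenvectorBasis.orthonormal.ne_zero i (by ext j; exact congrFun h0 j)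
  have hAv : A *ᵥ v = (ν + hB.eigenvalues i) • v := by
    have h1 : (A - ν • (1 : Matrix V V ℝ)) *ᵥ v = A *ᵥ v - ν • v := by
      rw [Matrix.sub_mulVec, Matrix.smul_mulVec, Matrix.one_mulVec]
    rw [h1] at hv
    have : A *ᵥ v = ν • v + hB.eigenvalues i • v := by rw [← hv]; abel
    rw [this, add_smul]
  have := h _ ⟨v, hvne, hAv⟩
  rw [Pi.zero_apply]; linarith

lemma psd_nonneg_quad {B : Matrix V V ℝ} (hB : B.PosSemidef) (x : V → ℝ) :
    0 ≤ x ⬝ᵥ (B *ᵥ x) := by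
  have := hB.dotProduct_mulVec_nonneg x
  simpa using this

lemma rayleigh_ub {A : Matrix V V ℝ} (hA : A.IsHermitian) {μ : ℝ}
    (h : ∀ ν, IsAdjEigenvalue A ν → ν ≤ μ) (x : V → ℝ) :
    x ⬝ᵥ (A *ᵥ x) ≤ μ * (x ⬝ᵥ x) := by
  have := psd_nonneg_quad (psd_of_le_eig hA h) x
  rw [Matrix.sub_mulVec, Matrix.smul_mulVec, Matrix.one_mulVec,
    dotProduct_sub, dotProduct_smul] at this
  simp only [smul_eq_mul] at this
  linarith

lemma rayleigh_lb {A : Matrix V V ℝ} (hA : A.IsHermitian) {ν : ℝ}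
    (h : ∀ β, IsAdjEigenvalue A β → ν ≤ β) (x : V → ℝ) :
    ν * (x ⬝ᵥ x) ≤ x ⬝ᵥ (A *ᵥ x) := by
  have := psd_nonneg_quad (psd_of_ge_eig hA h) x
  rw [Matrix.sub_mulVec, Matrix.smul_mulVec, Matrix.one_mulVec,
    dotProduct_sub, dotProduct_smul] at this
  simp only [smul_eq_mul] at this
  linarith

lemma psd_kernel {B : Matrix V V ℝ} (hB : B.PosSemidef) {x : V → ℝ}
    (h : x ⬝ᵥ (B *ᵥ x) = 0) : B *ᵥ x = 0 := by
  have := (hB.dotProduct_mulVec_zero_iff x).mp (by simpa using h)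
  exact this

lemma quad_mono_abs (A : Matrix V V ℝ) (hnn : ∀ i j, 0 ≤ A i j) (x : V → ℝ) :
    x ⬝ᵥ (A *ᵥ x) ≤ (fun v => |x v|) ⬝ᵥ (A *ᵥ (fun v => |x v|)) := by
  rw [quad_eq, quad_eq]
  apply Finset.sum_le_sum; intro i _
  apply Finset.sum_le_sum; intro j _
  have : x i * x j ≤ |x i| * |x j| := by
    calc x i * x j ≤ |x i * x j| := le_abs_self _
    _ = |x i| * |x j| := abs_mul _ _
  exact mul_le_mul_of_nonneg_left this (hnn i j)

lemma abs_dot_self (x : V → ℝ) :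
    (fun v => |x v|) ⬝ᵥ (fun v => |x v|) = x ⬝ᵥ x := by
  simp only [dotProduct]
  congr 1; ext i; rw [← abs_mul, abs_mul_self]

lemma abs_eigenvector {μ : ℝ} (hμ : ∀ ν, IsAdjEigenvalue (adjMat G) ν → ν ≤ μ)
    {x : V → ℝ} (hx : (adjMat G) *ᵥ x = μ • x) :
    (adjMat G) *ᵥ (fun v => |x v|) = μ • (fun v => |x v|) := by
  set A := adjMat G with hA
  set y : V → ℝ := fun v => |x v| with hy
  have herm := adjMat_isHermitian G
  have hqx : x ⬝ᵥ (A *ᵥ x) = μ * (x ⬝ᵥ x) := by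
    rw [hx, dotProduct_smul]; simp
  have hq1 : μ * (x ⬝ᵥ x) ≤ y ⬝ᵥ (A *ᵥ y) := by
    rw [← hqx]; exact quad_mono_abs A (adjMat_nonneg G) x
  have hq2 : y ⬝ᵥ (A *ᵥ y) ≤ μ * (x ⬝ᵥ x) := by
    have := rayleigh_ub herm hμ y
    rwa [abs_dot_self] at this
  have hq : y ⬝ᵥ (A *ᵥ y) = μ * (x ⬝ᵥ x) := le_antisymm hq2 hq1
  have hpsd := psd_of_le_eig herm hμ
  have hker : (μ • (1 : Matrix V V ℝ) - A) *ᵥ y = 0 := by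
    apply psd_kernel hpsd
    rw [Matrix.sub_mulVec, Matrix.smul_mulVec, Matrix.one_mulVec,
      dotProduct_sub, dotProduct_smul, hq]
    simp only [smul_eq_mul]
    rw [abs_dot_self]
    ring
  rw [Matrix.sub_mulVec, Matrix.smul_mulVec, Matrix.one_mulVec, sub_eq_zero] at hker
  exact hker.symm

lemma eigen_pos (hG : G.Connected) {μ : ℝ} {y : V → ℝ}
    (hy : (adjMat G) *ᵥ y = μ • y) (hnn : ∀ v, 0 ≤ y v) (hne : y ≠ 0) :
    ∀ v, 0 < y v := by
  have hspread : ∀ u w, y u = 0 → G.Adj u w → y w = 0 := by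
    intro u w hu huw
    have h1 : (adjMat G *ᵥ y) u = 0 := by rw [hy]; simp [hu]
    have h2 : ∑ j, adjMat G u j * y j = 0 := by
      rw [← h1]; rfl
    have h3 : ∀ j ∈ Finset.univ, 0 ≤ adjMat G u j * y j := fun j _ =>
      mul_nonneg (adjMat_nonneg G u j) (hnn j)
    have h4 := (Finset.sum_eq_zero_iff_of_nonneg h3).mp h2 w (Finset.mem_univ w)
    rw [adjMat_apply', if_pos huw] at h4
    linarith
  have hwalk : ∀ (u w : V) (_ : G.Walk u w), y u = 0 → y w = 0 := by
    intro u w p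
    induction p with
    | nil => exact id
    | cons h q ih => intro h0; exact ih (hspread _ _ h0 h)
  intro v
  rcases Function.ne_iff.mp hne with ⟨v₀, hv₀⟩
  rcases lt_or_eq_of_le (hnn v) with h | h
  · exact h
  · exfalso
    rcases (hG v v₀) with ⟨p⟩
    exact hv₀ (hwalk v v₀ p h.symm)

lemma weighted_quad {M : Matrix V V ℝ} (hnn : ∀ i j, 0 ≤ M i j)
    (hsym : ∀ i j, M i j = M j i) {c : ℝ} {y₀ : V → ℝ} (hy₀ : ∀ v, 0 < y₀ v)
    (hM : M *ᵥ y₀ = c • y₀) (x : V → ℝ) :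
    ∑ i, ∑ j, M i j * |x i * x j| ≤ c * (x ⬝ᵥ x) := by
  set r : V → ℝ := fun i => |x i| / y₀ i with hr
  have habs : ∀ i, |x i| = r i * y₀ i := by
    intro i
    rw [hr]
    exact (div_mul_cancel₀ _ (hy₀ i).ne').symm
  have hrow : ∀ i, ∑ j, M i j * y₀ j = c * y₀ i := by
    intro i
    have := congrFun hM i
    simpa [Matrix.mulVec, dotProduct] using this
  have hterm : ∀ i j, M i j * |x i * x j| ≤
      M i j * (r i ^ 2 * (y₀ i * y₀ j)) / 2 + M i j * (r j ^ 2 * (y₀ i * y₀ j)) / 2 := by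
    intro i j
    rw [abs_mul, habs i, habs j]
    nlinarith [mul_nonneg (mul_nonneg (hnn i j) (mul_nonneg (hy₀ i).le (hy₀ j).le))
      (sq_nonneg (r i - r j))]
  have hfirst : ∑ i, ∑ j, M i j * (r i ^ 2 * (y₀ i * y₀ j)) = c * (x ⬝ᵥ x) := by
    have hxi : ∀ i, (r i * y₀ i) ^ 2 = x i * x i := by
      intro i
      rw [← habs i]
      rw [sq_abs, sq]
    calc ∑ i, ∑ j, M i j * (r i ^ 2 * (y₀ i * y₀ j))
        = ∑ i, (r i ^ 2 * y₀ i) * ∑ j, M i j * y₀ j := by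
          congr 1; ext i; rw [Finset.mul_sum]; congr 1; ext j; ring
      _ = ∑ i, (r i ^ 2 * y₀ i) * (c * y₀ i) := by
          congr 1; ext i; rw [hrow i]
      _ = c * ∑ i, x i * x i := by
          rw [Finset.mul_sum]; congr 1; ext i; rw [← hxi i]; ring
      _ = c * (x ⬝ᵥ x) := rfl
  have hsecond : ∑ i, ∑ j, M i j * (r j ^ 2 * (y₀ i * y₀ j)) = c * (x ⬝ᵥ x) := by
    rw [Finset.sum_comm]
    rw [← hfirst]
    congr 1; ext i; congr 1; ext j
    rw [hsym i j]; ring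
  calc ∑ i, ∑ j, M i j * |x i * x j|
      ≤ ∑ i, ∑ j, (M i j * (r i ^ 2 * (y₀ i * y₀ j)) / 2
          + M i j * (r j ^ 2 * (y₀ i * y₀ j)) / 2) := by
        apply Finset.sum_le_sum; intro i _
        apply Finset.sum_le_sum; intro j _
        exact hterm i j
    _ = (∑ i, ∑ j, M i j * (r i ^ 2 * (y₀ i * y₀ j))) / 2
        + (∑ i, ∑ j, M i j * (r j ^ 2 * (y₀ i * y₀ j))) / 2 := by
        rw [Finset.sum_div, Finset.sum_div, ← Finset.sum_add_distrib]
        congr 1; ext i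
        rw [Finset.sum_div, Finset.sum_div, ← Finset.sum_add_distrib]
    _ = c * (x ⬝ᵥ x) := by rw [hfirst, hsecond]; ring

lemma pow_nonneg_entries : ∀ (k : ℕ) (i j : V), 0 ≤ (adjMat G ^ k) i j := by
  intro k
  induction k with
  | zero => intro i j; simp [Matrix.one_apply]; positivity
  | succ k ih =>
    intro i j
    rw [pow_succ, Matrix.mul_apply]
    exact Finset.sum_nonneg fun l _ => mul_nonneg (ih i l) (adjMat_nonneg G l j)

lemma pow_symm (k : ℕ) (i j : V) : (adjMat G ^ k) i j = (adjMat G ^ k) j i := by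
  have h := ((adjMat_isHermitian G).pow k).eq
  have := congrFun (congrFun h i) j
  rw [Matrix.conjTranspose_apply] at this
  simpa using this.symm

lemma pow_mulVec_eigen {A : Matrix V V ℝ} {c : ℝ} {y : V → ℝ}
    (h : A *ᵥ y = c • y) (k : ℕ) : (A ^ k) *ᵥ y = c ^ k • y := by
  induction k with
  | zero => simp [Matrix.one_mulVec]
  | succ k ih =>
    rw [pow_succ', ← Matrix.mulVec_mulVec, ih, Matrix.mulVec_smul, h, smul_smul, pow_succ']
    rw [mul_comm]

lemma pow_diag_ge_one {k : ℕ} : ∀ {u v : V}, (∃ p : G.Walk u v, p.length = k) →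
    1 ≤ (adjMat G ^ k) u v := by
  induction k with
  | zero =>
    intro u v ⟨p, hp⟩
    have : u = v := p.eq_of_length_eq_zero hp
    subst this
    simp [Matrix.one_apply]
  | succ k ih =>
    intro u v ⟨p, hp⟩
    cases p with
    | nil => simp at hp
    | @cons _ w _ h q =>
      simp only [SimpleGraph.Walk.length_cons, Nat.succ.injEq] at hp
      have hq : 1 ≤ (adjMat G ^ k) w v := ih ⟨q, hp⟩
      rw [pow_succ', Matrix.mul_apply]
      have hterm : (1 : ℝ) ≤ adjMat G u w * (adjMat G ^ k) w v := by
        rw [adjMat_apply', if_pos h, one_mul]; exact hq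
      calc (1 : ℝ) ≤ adjMat G u w * (adjMat G ^ k) w v := hterm
        _ ≤ ∑ l, adjMat G u l * (adjMat G ^ k) l v := by
            apply Finset.single_le_sum (f := fun l => adjMat G u l * (adjMat G ^ k) l v)
              (fun l _ => mul_nonneg (adjMat_nonneg G u l) (pow_nonneg_entries G k l v))
              (Finset.mem_univ w)

lemma exists_closed_odd_walk (hG : G.Connected) (hnb : ¬ G.Colorable 2)
    {D : ℕ} (hD1 : ∀ u v, G.dist u v ≤ D) (hnbr : ∀ v : V, ∃ u, G.Adj v u) (v : V) :
    ∃ p : G.Walk v v, p.length = 2 * D + 1 := by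
  obtain ⟨u, hu⟩ := hnbr v
  have pad : ∀ m : ℕ, ∀ W : G.Walk v v, ∃ W' : G.Walk v v, W'.length = W.length + 2 * m := by
    intro m
    induction m with
    | zero => intro W; exact ⟨W, by ring⟩
    | succ m ih =>
      intro W
      obtain ⟨W', hW'⟩ := ih W
      refine ⟨.cons hu (.cons hu.symm W'), ?_⟩
      simp only [SimpleGraph.Walk.length_cons, hW']
      ring
  have hedge : ∃ a b, G.Adj a b ∧ G.dist v a = G.dist v b := by
    by_contra hcon
    push_neg at hcon
    apply hnb
    refine ⟨SimpleGraph.Coloring.mk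
      (fun w => (⟨G.dist v w % 2, Nat.mod_lt _ (by norm_num)⟩ : Fin 2)) ?_⟩
    intro a b hab hEq
    have hne := hcon a b hab
    have h1 : G.dist v a ≤ G.dist v b + 1 := by
      have := hG.dist_triangle (u := v) (v := b) (w := a)
      rwa [SimpleGraph.dist_eq_one_iff_adj.mpr hab.symm] at this
    have h2 : G.dist v b ≤ G.dist v a + 1 := by
      have := hG.dist_triangle (u := v) (v := a) (w := b)
      rwa [SimpleGraph.dist_eq_one_iff_adj.mpr hab] at this
    have hmod : G.dist v a % 2 = G.dist v b % 2 := by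
      simpa [Fin.mk.injEq] using hEq
    omega
  obtain ⟨a, b, hab, hd⟩ := hedge
  obtain ⟨p1, hp1⟩ := hG.exists_walk_length_eq_dist v a
  obtain ⟨p2, hp2⟩ := hG.exists_walk_length_eq_dist v b
  have hℓ : G.dist v a ≤ D := hD1 v a
  set W0 : G.Walk v v := p1.append (SimpleGraph.Walk.cons hab p2.reverse) with hW0
  have hlen : W0.length = 2 * G.dist v a + 1 := by
    rw [hW0, SimpleGraph.Walk.length_append, SimpleGraph.Walk.length_cons,
      SimpleGraph.Walk.length_reverse, hp1, hp2, ← hd]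
    ring
  obtain ⟨W', hW'⟩ := pad (D - G.dist v a) W0
  refine ⟨W', ?_⟩
  rw [hW', hlen]
  omega

lemma dot_self_pos {x : V → ℝ} (hx : x ≠ 0) : 0 < x ⬝ᵥ x := by
  rcases Function.ne_iff.mp hx with ⟨i, hi⟩
  apply Finset.sum_pos' (fun j _ => mul_self_nonneg (x j))
  refine ⟨i, Finset.mem_univ i, ?_⟩
  have := mul_self_nonneg (x i)
  rcases this.lt_or_eq with h | h
  · exact h
  · exact absurd (mul_self_eq_zero.mp h.symm) hi

lemma gap_lower (hG : G.Connected) (hnb : ¬ G.Colorable 2)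
    {D : ℕ} (hD1 : ∀ u v, G.dist u v ≤ D) (hnbr : ∀ v : V, ∃ u, G.Adj v u)
    {μ ν : ℝ} (hμ : ∀ β, IsAdjEigenvalue (adjMat G) β → β ≤ μ)
    {y₀ : V → ℝ} (hy₀pos : ∀ v, 0 < y₀ v) (hy₀ : (adjMat G) *ᵥ y₀ = μ • y₀)
    {z : V → ℝ} (hz : z ≠ 0) (hzeig : (adjMat G) *ᵥ z = ν • z) :
    2 ≤ μ ^ (2 * D + 1) + ν ^ (2 * D + 1) := by
  set k := 2 * D + 1 with hk
  set A := adjMat G with hA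
  set M := A ^ k with hM
  set s := z ⬝ᵥ z with hs
  have hspos : 0 < s := dot_self_pos hz
  have hMnn : ∀ i j, 0 ≤ M i j := pow_nonneg_entries G k
  have hMsym : ∀ i j, M i j = M j i := pow_symm G k
  have hMy₀ : M *ᵥ y₀ = μ ^ k • y₀ := pow_mulVec_eigen hy₀ k
  have hMz : M *ᵥ z = ν ^ k • z := pow_mulVec_eigen hzeig k
  -- upper bound on the absolute quadratic form
  have hupper : ∑ i, ∑ j, M i j * |z i * z j| ≤ μ ^ k * s :=
    weighted_quad hMnn hMsym hy₀pos hMy₀ z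
  -- the quadratic form of z
  have hquadz : ∑ i, ∑ j, M i j * (z i * z j) = ν ^ k * s := by
    rw [← quad_eq, hMz, dotProduct_smul]; simp [hs]
  -- diagonal entries at least one
  have hdiag : ∀ v : V, 1 ≤ M v v := by
    intro v
    obtain ⟨p, hp⟩ := exists_closed_odd_walk G hG hnb hD1 hnbr v
    exact pow_diag_ge_one G ⟨p, hp⟩
  -- lower bound
  have hlower : 2 * s ≤ (∑ i, ∑ j, M i j * |z i * z j|)
      + ∑ i, ∑ j, M i j * (z i * z j) := by
    have h1 : ∀ i : V, 2 * (z i * z i) ≤ ∑ j, (M i j * |z i * z j| + M i j * (z i * z j)) := by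
      intro i
      have hnn : ∀ j ∈ Finset.univ, 0 ≤ M i j * |z i * z j| + M i j * (z i * z j) := by
        intro j _
        have : -(z i * z j) ≤ |z i * z j| := neg_le_abs _
        nlinarith [hMnn i j, abs_nonneg (z i * z j)]
      have hii : 2 * (z i * z i) ≤ M i i * |z i * z i| + M i i * (z i * z i) := by
        have h0 : |z i * z i| = z i * z i := abs_of_nonneg (mul_self_nonneg _)
        rw [h0]
        nlinarith [hdiag i, mul_self_nonneg (z i)]
      exact hii.trans (Finset.single_le_sum hnn (Finset.mem_univ i))
    calc 2 * s = ∑ i, 2 * (z i * z i) := by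
          rw [hs, dotProduct, Finset.mul_sum]
      _ ≤ ∑ i, ∑ j, (M i j * |z i * z j| + M i j * (z i * z j)) :=
          Finset.sum_le_sum fun i _ => h1 i
      _ = _ := by
          rw [← Finset.sum_add_distrib]
          congr 1; ext i
          rw [← Finset.sum_add_distrib]
  have : 2 * s ≤ μ ^ k * s + ν ^ k * s := by
    rw [← hquadz]
    exact hlower.trans (by linarith [hupper])
  have := (mul_le_mul_iff_of_pos_right hspos).mp (by linarith : 2 * s ≤ (μ ^ k + ν ^ k) * s)
  linarith

lemma list_cs (L : List ℝ) : L.sum ^ 2 ≤ L.length * (L.map (fun a => a ^ 2)).sum := by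
  induction L with
  | nil => simp
  | cons a l ih =>
    simp only [List.sum_cons, List.length_cons, List.map_cons]
    have hT : 0 ≤ (l.map (fun a => a ^ 2)).sum := by
      apply List.sum_nonneg; intro x hx
      obtain ⟨a, _, rfl⟩ := List.mem_map.mp hx
      positivity
    push_cast
    rcases l.eq_nil_or_concat with rfl | ⟨l', b, rfl⟩
    · simp
    · simp only [List.concat_eq_append] at ih hT ⊢
      have hL : (1 : ℝ) ≤ ((l' ++ [b]).length : ℝ) := by
        simp only [List.length_append, List.length_cons, List.length_nil]
        push_cast; linarith [Nat.cast_nonneg (α := ℝ) l'.length]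
      set L : ℝ := ((l' ++ [b]).length : ℝ)
      set S : ℝ := (l' ++ [b]).sum
      set T : ℝ := ((l' ++ [b]).map (fun a => a ^ 2)).sum
      have key : 0 ≤ L * ((L + 1) * (a ^ 2 + T) - (a + S) ^ 2) := by
        nlinarith [ih, hT, sq_nonneg (L * a - S)]
      nlinarith [key, hL, ih, hT]

lemma darts_telescope {u v : V} (p : G.Walk u v) (y : V → ℝ) :
    (p.darts.map (fun d => y d.fst - y d.snd)).sum = y u - y v := by
  induction p with
  | nil => simp
  | cons h q ih => simp [ih]

lemma darts_sum_le_quad {u v : V} {p : G.Walk u v} (hp : p.IsPath) (y : V → ℝ) :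
    2 * (p.darts.map (fun d => (y d.fst - y d.snd) ^ 2)).sum
      ≤ ∑ i, ∑ j, adjMat G i j * (y i - y j) ^ 2 := by
  set f : V × V → ℝ := fun q => (y q.1 - y q.2) ^ 2 with hf
  have hdnodup : p.darts.Nodup :=
    SimpleGraph.Walk.darts_nodup_of_support_nodup hp.support_nodup
  set L1 : List (V × V) := p.darts.map SimpleGraph.Dart.toProd with hL1
  set L2 : List (V × V) := p.darts.map (fun d => d.toProd.swap) with hL2
  have hL1n : L1.Nodup := hdnodup.map SimpleGraph.Dart.toProd_injective
  have hL2n : L2.Nodup := hdnodup.map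
    (fun d₁ d₂ hd => SimpleGraph.Dart.toProd_injective (Prod.swap_injective hd))
  have hdisj : ∀ q ∈ L1, q ∉ L2 := by
    intro q hq1 hq2
    obtain ⟨d₁, hd₁, rfl⟩ := List.mem_map.mp hq1
    obtain ⟨d₂, hd₂, heq⟩ := List.mem_map.mp hq2
    have hsymm : d₁ = d₂.symm := by
      apply SimpleGraph.Dart.ext
      exact heq.symm
    have hedge : d₁.edge = d₂.edge := by rw [hsymm, SimpleGraph.Dart.edge_symm]
    have hinj := (List.nodup_map_iff_inj_on hdnodup).mp
      (by rw [← SimpleGraph.Walk.edges]; exact hp.edges_nodup)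
    have : d₁ = d₂ := hinj d₁ hd₁ d₂ hd₂ hedge
    rw [this] at hsymm
    exact SimpleGraph.Dart.symm_ne d₂ hsymm.symm
  have happ : (L1 ++ L2).Nodup := by
    rw [List.nodup_append]
    exact ⟨hL1n, hL2n, fun a ha b hb hab => hdisj a ha (hab ▸ hb)⟩
  have hsum12 : ((L1 ++ L2).map f).sum
      = 2 * (p.darts.map (fun d => (y d.fst - y d.snd) ^ 2)).sum := by
    rw [List.map_append, List.sum_append, hL1, hL2, List.map_map, List.map_map]
    have h1 : (f ∘ SimpleGraph.Dart.toProd)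
        = fun d : G.Dart => (y d.fst - y d.snd) ^ 2 := rfl
    have h2 : (f ∘ fun d : G.Dart => d.toProd.swap)
        = fun d : G.Dart => (y d.snd - y d.fst) ^ 2 := rfl
    rw [h1, h2]
    have : (p.darts.map fun d : G.Dart => (y d.snd - y d.fst) ^ 2)
        = p.darts.map fun d : G.Dart => (y d.fst - y d.snd) ^ 2 := by
      apply List.map_congr_left; intro d _; ring
    rw [this]; ring
  have hadj : ∀ q ∈ (L1 ++ L2).toFinset, adjMat G q.1 q.2 = 1 := by
    intro q hq
    rw [List.mem_toFinset, List.mem_append] at hq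
    rcases hq with hq | hq
    · obtain ⟨d, _, rfl⟩ := List.mem_map.mp hq
      rw [adjMat_apply', if_pos d.adj]
    · obtain ⟨d, _, rfl⟩ := List.mem_map.mp hq
      rw [adjMat_apply']
      simp only [Prod.fst_swap, Prod.snd_swap]
      rw [if_pos d.adj.symm]
  calc 2 * (p.darts.map (fun d => (y d.fst - y d.snd) ^ 2)).sum
      = ∑ q ∈ (L1 ++ L2).toFinset, f q := by
        rw [List.sum_toFinset _ happ, hsum12]
    _ = ∑ q ∈ (L1 ++ L2).toFinset, adjMat G q.1 q.2 * f q := by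
        apply Finset.sum_congr rfl; intro q hq; rw [hadj q hq, one_mul]
    _ ≤ ∑ q ∈ (Finset.univ : Finset (V × V)), adjMat G q.1 q.2 * f q := by
        apply Finset.sum_le_sum_of_subset_of_nonneg (Finset.subset_univ _)
        intro q _ _
        exact mul_nonneg (adjMat_nonneg G q.1 q.2) (by rw [hf]; positivity)
    _ = ∑ i, ∑ j, adjMat G i j * (y i - y j) ^ 2 := by
        rw [← Finset.univ_product_univ, ← Finset.sum_product']

lemma quad_degrees (y : V → ℝ) :
    ∑ i, ∑ j, adjMat G i j * (y i - y j) ^ 2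
      = 2 * (∑ v, (G.degree v : ℝ) * y v ^ 2) - 2 * (y ⬝ᵥ (adjMat G *ᵥ y)) := by
  set A := adjMat G with hA
  have e1 : ∀ i : V, ∑ j, A i j * (y i - y j) ^ 2
      = (∑ j, A i j * y i ^ 2) + (∑ j, A i j * y j ^ 2) - 2 * ∑ j, A i j * (y i * y j) := by
    intro i
    rw [Finset.mul_sum, ← Finset.sum_add_distrib, ← Finset.sum_sub_distrib]
    congr 1; ext j; ring
  have t1 : ∑ i, ∑ j, A i j * (y i : ℝ) ^ 2 = ∑ i, (G.degree i : ℝ) * y i ^ 2 := by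
    congr 1; ext i
    rw [← Finset.sum_mul, adjMat_rowsum]
  have t2 : ∑ i : V, ∑ j, A i j * (y j : ℝ) ^ 2 = ∑ i, (G.degree i : ℝ) * y i ^ 2 := by
    rw [Finset.sum_comm, ← t1]
    congr 1; ext i; congr 1; ext j
    rw [hA, adjMat_symm]
  calc ∑ i, ∑ j, A i j * (y i - y j) ^ 2
      = (∑ i, ∑ j, A i j * y i ^ 2) + (∑ i, ∑ j, A i j * y j ^ 2)
        - 2 * ∑ i, ∑ j, A i j * (y i * y j) := by
        rw [show (∑ i : V, ∑ j : V, A i j * (y i - y j) ^ 2)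
            = ∑ i, ((∑ j, A i j * y i ^ 2) + (∑ j, A i j * y j ^ 2)
              - 2 * ∑ j, A i j * (y i * y j)) from Finset.sum_congr rfl (fun i _ => e1 i)]
        rw [Finset.sum_sub_distrib, Finset.sum_add_distrib, ← Finset.mul_sum]
    _ = 2 * (∑ v, (G.degree v : ℝ) * y v ^ 2) - 2 * (y ⬝ᵥ (A *ᵥ y)) := by
        rw [t1, t2, quad_eq]; ring

lemma reg_gap (hG : G.Connected) (hnreg : ¬ ∃ r, G.IsRegularOfDegree r)
    {D : ℕ} (hD1 : ∀ u v, G.dist u v ≤ D) (hD : 1 ≤ D)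
    {μ : ℝ} (hμ : ∀ β, IsAdjEigenvalue (adjMat G) β → β ≤ μ)
    {y : V → ℝ} (hy : adjMat G *ᵥ y = μ • y) (hypos : ∀ v, 0 < y v) :
    1 / ((Fintype.card V : ℝ) * (D + 1)) < (G.maxDegree : ℝ) - μ := by
  have hne : Nonempty V := hG.nonempty
  set A := adjMat G with hA
  set s := y ⬝ᵥ y with hs
  have hyne : y ≠ 0 := by
    intro h0
    obtain ⟨v⟩ := hne
    have := hypos v
    rw [h0] at this
    simp at this
  have hspos : 0 < s := dot_self_pos hyne
  have hquad : y ⬝ᵥ (A *ᵥ y) = μ * s := by rw [hy, dotProduct_smul]; simp [hs]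
  have hdeg : ∀ v, (G.degree v : ℝ) ≤ (G.maxDegree : ℝ) := by
    intro v; exact_mod_cast G.degree_le_maxDegree v
  -- a vertex of submaximal degree
  have hw₀ : ∃ w₀, (G.degree w₀ : ℝ) + 1 ≤ (G.maxDegree : ℝ) := by
    by_contra hcon
    push_neg at hcon
    apply hnreg
    refine ⟨G.maxDegree, fun v => ?_⟩
    have h1 := hcon v
    have h2 := G.degree_le_maxDegree v
    have : (G.maxDegree : ℝ) < (G.degree v : ℝ) + 1 := h1
    have : G.maxDegree < G.degree v + 1 := by exact_mod_cast this
    omega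
  obtain ⟨w₀, hw₀⟩ := hw₀
  -- the vertex with maximal y
  obtain ⟨p, -, hp⟩ := Finset.exists_max_image Finset.univ y ⟨Classical.arbitrary V, Finset.mem_univ _⟩
  have hple : ∀ v, y v ≤ y p := fun v => hp v (Finset.mem_univ v)
  -- strict max bound
  have hstrict : s < (Fintype.card V : ℝ) * y p ^ 2 := by
    have hvne : ∃ v, y v ≠ y p := by
      by_contra hall
      push_neg at hall
      apply hnreg
      have hdv : ∀ v : V, (G.degree v : ℝ) = μ := by
        intro v
        have h1 : (A *ᵥ y) v = μ * y p := by rw [hy]; simp [hall v]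
        have h2 : (A *ᵥ y) v = ∑ j, A v j * y j := rfl
        have h3 : ∑ j, A v j * y j = (G.degree v : ℝ) * y p := by
          rw [← adjMat_rowsum (G := G) v, Finset.sum_mul]
          congr 1; ext j; rw [hall j]
        have hppos := hypos p
        have := h1.symm.trans (h2.symm ▸ h3)
        exact (mul_right_cancel₀ hppos.ne' this).symm
      obtain ⟨v⟩ := hne
      refine ⟨G.degree v, fun w => ?_⟩
      have := (hdv w).trans (hdv v).symm
      exact_mod_cast this
    obtain ⟨v, hv⟩ := hvne
    have hvlt : y v < y p := lt_of_le_of_ne (hple v) hv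
    have hsq : ∀ u : V, y u * y u ≤ y p ^ 2 := by
      intro u
      have h1 := hypos u
      have h2 := hple u
      nlinarith
    calc s = ∑ u, y u * y u := rfl
      _ < ∑ _u : V, y p ^ 2 := by
          apply Finset.sum_lt_sum (fun u _ => hsq u)
          refine ⟨v, Finset.mem_univ v, ?_⟩
          have h1 := hypos v
          nlinarith
      _ = (Fintype.card V : ℝ) * y p ^ 2 := by
          rw [Finset.sum_const, Finset.card_univ, nsmul_eq_mul]
  -- shortest path from p to w₀
  obtain ⟨P, hPpath, hPlen⟩ := hG.exists_path_of_dist p w₀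
  have hPD : (P.length : ℝ) ≤ (D : ℝ) := by exact_mod_cast hPlen ▸ hD1 p w₀
  set T := (P.darts.map (fun d => (y d.fst - y d.snd) ^ 2)).sum with hT
  have hT0 : 0 ≤ T := by
    apply List.sum_nonneg; intro x hx
    obtain ⟨d, _, rfl⟩ := List.mem_map.mp hx
    positivity
  -- Cauchy–Schwarz along the path
  have hCS : (y p - y w₀) ^ 2 ≤ (D : ℝ) * T := by
    have h1 := list_cs (P.darts.map (fun d => y d.fst - y d.snd))
    rw [darts_telescope] at h1
    rw [List.length_map, List.map_map] at h1
    have h2 : ((P.darts.map fun d => ((y d.fst - y d.snd) ^ 2 : ℝ))).sum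
        = ((P.darts.map ((fun a => a ^ 2) ∘ fun d => y d.fst - y d.snd))).sum := rfl
    have h3 : (P.darts.length : ℝ) = (P.length : ℝ) := by
      rw [SimpleGraph.Walk.length_darts]
    calc (y p - y w₀) ^ 2 ≤ (P.darts.length : ℝ)
          * ((P.darts.map ((fun a => a ^ 2) ∘ fun d => y d.fst - y d.snd))).sum := h1
      _ = (P.length : ℝ) * T := by rw [h3, hT, h2]
      _ ≤ (D : ℝ) * T := by
          apply mul_le_mul_of_nonneg_right hPD hT0
  -- main identity and bounds
  have hQ := quad_degrees G y
  have hQT := darts_sum_le_quad G hPpath y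
  have hDeg1 : y w₀ ^ 2 ≤ ∑ v, ((G.maxDegree : ℝ) - (G.degree v : ℝ)) * y v ^ 2 := by
    have h1 : ((G.maxDegree : ℝ) - (G.degree w₀ : ℝ)) * y w₀ ^ 2 ≥ y w₀ ^ 2 := by
      nlinarith [sq_nonneg (y w₀)]
    have h2 : ∀ v ∈ Finset.univ, 0 ≤ ((G.maxDegree : ℝ) - (G.degree v : ℝ)) * y v ^ 2 :=
      fun v _ => mul_nonneg (by linarith [hdeg v]) (sq_nonneg _)
    linarith [Finset.single_le_sum h2 (Finset.mem_univ w₀)]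
  have hmain : ((G.maxDegree : ℝ) - μ) * s
      ≥ y w₀ ^ 2 + (y p - y w₀) ^ 2 / (D : ℝ) := by
    have hsum : ∑ v, ((G.maxDegree : ℝ) - (G.degree v : ℝ)) * y v ^ 2
        = (G.maxDegree : ℝ) * s - ∑ v, (G.degree v : ℝ) * y v ^ 2 := by
      have h9 : (G.maxDegree : ℝ) * s = ∑ v, (G.maxDegree : ℝ) * y v ^ 2 := by
        rw [hs, dotProduct, Finset.mul_sum]
        congr 1; ext v; ring
      rw [h9, ← Finset.sum_sub_distrib]
      congr 1; ext v; ring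
    have hDpos : (0 : ℝ) < (D : ℝ) := by exact_mod_cast Nat.lt_of_lt_of_le Nat.zero_lt_one hD
    have hTD : (y p - y w₀) ^ 2 / (D : ℝ) ≤ T := by
      rw [div_le_iff₀ hDpos]
      linarith [hCS]
    have hQ2 : 2 * T ≤ 2 * (∑ v, (G.degree v : ℝ) * y v ^ 2) - 2 * (μ * s) := by
      rw [← hquad, ← hQ]
      exact hQT
    nlinarith [hDeg1, hsum, hTD, hQ2]
  -- final arithmetic
  have hfinal : ((G.maxDegree : ℝ) - μ) * s > s / ((Fintype.card V : ℝ) * ((D : ℝ) + 1)) := by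
    have hDpos : (0 : ℝ) < (D : ℝ) := by exact_mod_cast Nat.lt_of_lt_of_le Nat.zero_lt_one hD
    have hmin : y w₀ ^ 2 + (y p - y w₀) ^ 2 / (D : ℝ) ≥ y p ^ 2 / ((D : ℝ) + 1) := by
      rw [ge_iff_le, div_le_iff₀ (by linarith)]
      set c : ℝ := (y p - y w₀) ^ 2 / (D : ℝ) with hcdef
      have hc : c * (D : ℝ) = (y p - y w₀) ^ 2 := by
        rw [hcdef]; field_simp
      have hc0 : 0 ≤ c := by positivity
      nlinarith [sq_nonneg (((D : ℝ) + 1) * y w₀ - y p), hDpos, hc, hc0]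
    have hcard : (0 : ℝ) < (Fintype.card V : ℝ) := by
      exact_mod_cast Fintype.card_pos
    have hstep : y p ^ 2 / ((D : ℝ) + 1) > s / ((Fintype.card V : ℝ) * ((D : ℝ) + 1)) := by
      rw [gt_iff_lt, div_lt_div_iff₀ (by positivity) (by linarith)]
      calc s * ((D : ℝ) + 1) < ((Fintype.card V : ℝ) * y p ^ 2) * ((D : ℝ) + 1) := by
            apply mul_lt_mul_of_pos_right hstrict (by linarith)
        _ = y p ^ 2 * ((Fintype.card V : ℝ) * ((D : ℝ) + 1)) := by ring
      
    linarith [hmain, hmin, hstep]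
  have h1 : s / ((Fintype.card V : ℝ) * ((D : ℝ) + 1))
      = (1 / ((Fintype.card V : ℝ) * ((D : ℝ) + 1))) * s := by ring
  have h2 : (1 / ((Fintype.card V : ℝ) * ((D : ℝ) + 1))) * s < ((G.maxDegree : ℝ) - μ) * s := by
    rw [← h1]; exact hfinal
  exact (mul_lt_mul_iff_of_pos_right hspos).mp h2



theorem stmt17 {n : ℕ} (G : SimpleGraph (Fin n)) (hG : G.Connected)
    [DecidableRel G.Adj]
    (hnreg : ¬ ∃ r, G.IsRegularOfDegree r) (hnb : ¬ G.Colorable 2)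
    (D : ℕ) (hD1 : ∀ u v, G.dist u v ≤ D) (hD2 : ∃ u v, G.dist u v = D)
    (μ ν : ℝ) (hmax : IsMaxAdjEigenvalue (adjMat G) μ)
    (hmin : IsMinAdjEigenvalue (adjMat G) ν) :
    (G.maxDegree : ℝ) + ν > 1 / (n * (D + 1)) + 1 / (μ ^ (2 * D) * n) := by
  classical
  obtain ⟨⟨x, hxne, hxeig⟩, hμall⟩ := hmax
  obtain ⟨⟨z, hzne, hzeig⟩, hνall⟩ := hmin
  have hne : Nonempty (Fin n) := hG.nonempty
  -- at least two vertices
  have hn2 : 2 ≤ n := by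
    by_contra hcon
    push_neg at hcon
    have hsub : Subsingleton (Fin n) := by
      apply Fintype.card_le_one_iff_subsingleton.mp
      simpa using Nat.lt_succ_iff.mp hcon
    obtain ⟨v₀⟩ := hne
    exact hnreg ⟨G.degree v₀, fun v => by rw [Subsingleton.elim v v₀]⟩
  -- every vertex has a neighbor
  have hnbr : ∀ v : Fin n, ∃ u, G.Adj v u := by
    intro v
    obtain ⟨w, hw⟩ := Fintype.exists_ne_of_one_lt_card (by rw [Fintype.card_fin]; omega) v
    obtain ⟨p⟩ := hG v w
    cases p with
    | nil => exact absurd rfl hw.symm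
    | cons h q => exact ⟨_, h⟩
  -- positive Perron eigenvector
  set y : Fin n → ℝ := fun v => |x v| with hy
  have hyeig : adjMat G *ᵥ y = μ • y := abs_eigenvector G hμall hxeig
  have hyne : y ≠ 0 := by
    intro h0
    apply hxne
    ext v
    have := congrFun h0 v
    simpa [hy] using this
  have hypos : ∀ v, 0 < y v :=
    eigen_pos G hG hyeig (fun v => abs_nonneg (x v)) hyne
  -- D ≥ 1
  have hD : 1 ≤ D := by
    obtain ⟨v₀⟩ := hne
    obtain ⟨w, hw⟩ := Fintype.exists_ne_of_one_lt_card (by rw [Fintype.card_fin]; omega) v₀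
    have h1 : 0 < G.dist w v₀ := hG.pos_dist_of_ne hw
    have h2 := hD1 w v₀
    omega
  -- D < n
  have hDn : D < n := by
    obtain ⟨u, v, huv⟩ := hD2
    obtain ⟨P, hPpath, hPlen⟩ := hG.exists_path_of_dist u v
    have := hPpath.length_lt
    rw [hPlen, huv] at this
    simpa using this
  -- μ > 0
  have hμpos : 0 < μ := by
    obtain ⟨v₀⟩ := hne
    obtain ⟨u₀, hu₀⟩ := hnbr v₀
    have h1 : (adjMat G *ᵥ y) v₀ = μ * y v₀ := by rw [hyeig]; simp
    have h2 : (adjMat G *ᵥ y) v₀ = ∑ j, adjMat G v₀ j * y j := rfl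
    have h3 : adjMat G v₀ u₀ * y u₀ ≤ ∑ j, adjMat G v₀ j * y j :=
      Finset.single_le_sum
        (fun j _ => mul_nonneg (adjMat_nonneg G v₀ j) (hypos j).le) (Finset.mem_univ u₀)
    rw [adjMat_apply', if_pos hu₀, one_mul] at h3
    have h4 : 0 < μ * y v₀ := lt_of_lt_of_le (hypos u₀) (h3.trans (h2 ▸ h1).le)
    nlinarith [hypos v₀]
  -- Lemma A : the degree-eigenvalue gap
  have hlemA : 1 / ((n : ℝ) * ((D : ℝ) + 1)) < (G.maxDegree : ℝ) - μ := by
    have := reg_gap G hG hnreg hD1 hD hμall hyeig hypos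
    rwa [Fintype.card_fin] at this
  -- |ν| ≤ μ
  have hsz : 0 < z ⬝ᵥ z := dot_self_pos hzne
  have hquadz : z ⬝ᵥ (adjMat G *ᵥ z) = ν * (z ⬝ᵥ z) := by
    rw [hzeig, dotProduct_smul]; simp
  have hνμ : ν ≤ μ := by
    have := rayleigh_ub (adjMat_isHermitian G) hμall z
    rw [hquadz] at this
    exact le_of_mul_le_mul_right this hsz
  have hνlb : -μ ≤ ν := by
    have habs : ∑ i, ∑ j, adjMat G i j * |z i * z j| ≤ μ * (z ⬝ᵥ z) := by
      have := weighted_quad (M := adjMat G) (adjMat_nonneg G) (adjMat_symm G)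
        hypos (by simpa using hyeig) z
      simpa using this
    have hlow : -(∑ i, ∑ j, adjMat G i j * |z i * z j|) ≤ ν * (z ⬝ᵥ z) := by
      rw [← hquadz, quad_eq]
      rw [← Finset.sum_neg_distrib]
      apply Finset.sum_le_sum
      intro i _
      rw [← Finset.sum_neg_distrib]
      apply Finset.sum_le_sum
      intro j _
      have h1 := adjMat_nonneg G i j
      have h2 : -(z i * z j) ≤ |z i * z j| := neg_le_abs _
      nlinarith
    have : -(μ * (z ⬝ᵥ z)) ≤ ν * (z ⬝ᵥ z) := by linarith
    have := le_of_mul_le_mul_right (by linarith : (-μ) * (z ⬝ᵥ z) ≤ ν * (z ⬝ᵥ z)) hsz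
    linarith
  -- Lemma B : the smallest eigenvalue gap
  have hgap : 2 ≤ μ ^ (2 * D + 1) + ν ^ (2 * D + 1) :=
    gap_lower G hG hnb hD1 hnbr hμall hypos hyeig hzne hzeig
  set k := 2 * D + 1 with hk
  set b : ℝ := -ν with hb
  have hbμ : b ≤ μ := by rw [hb]; linarith
  have hνpow : ν ^ k = -(b ^ k) := by
    have hodd : Odd k := ⟨D, by omega⟩
    rw [hb, hodd.neg_pow, neg_neg]
  have hgap2 : 2 ≤ μ ^ k - b ^ k := by rw [hνpow] at hgap; linarith
  have hfact : (∑ i ∈ Finset.range k, μ ^ i * b ^ (k - 1 - i)) * (μ - b) = μ ^ k - b ^ k :=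
    geom_sum₂_mul μ b k
  have habsb : |b| ≤ μ := by
    rw [abs_le]
    constructor <;> [skip; exact hbμ]
    rw [hb]; linarith
  have hSb : (∑ i ∈ Finset.range k, μ ^ i * b ^ (k - 1 - i)) ≤ (k : ℝ) * μ ^ (k - 1) := by
    have hbd : ∀ i ∈ Finset.range k, μ ^ i * b ^ (k - 1 - i) ≤ μ ^ (k - 1) := by
      intro i hi
      have hik : i ≤ k - 1 := by
        have := Finset.mem_range.mp hi; omega
      calc μ ^ i * b ^ (k - 1 - i) ≤ |μ ^ i * b ^ (k - 1 - i)| := le_abs_self _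
        _ = μ ^ i * |b| ^ (k - 1 - i) := by
            rw [abs_mul, abs_pow, abs_pow, abs_of_pos hμpos]
        _ ≤ μ ^ i * μ ^ (k - 1 - i) := by
            apply mul_le_mul_of_nonneg_left _ (by positivity)
            exact pow_le_pow_left₀ (abs_nonneg b) habsb _
        _ = μ ^ (k - 1) := by rw [← pow_add]; congr 1; omega
    calc (∑ i ∈ Finset.range k, μ ^ i * b ^ (k - 1 - i))
        ≤ ∑ _i ∈ Finset.range k, μ ^ (k - 1) := Finset.sum_le_sum hbd
      _ = (k : ℝ) * μ ^ (k - 1) := by rw [Finset.sum_const, Finset.card_range, nsmul_eq_mul]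
  have hμb : 0 < μ - b := by
    rcases lt_or_ge b μ with h | h
    · linarith
    · exfalso
      have : μ ^ k ≤ b ^ k := pow_le_pow_left₀ hμpos.le h k
      linarith
  have hgap3 : 2 ≤ (μ - b) * ((k : ℝ) * μ ^ (k - 1)) := by
    have hSpos : 0 < (∑ i ∈ Finset.range k, μ ^ i * b ^ (k - 1 - i)) := by
      nlinarith [hfact, hgap2, hμb]
    nlinarith [hfact, hgap2, mul_le_mul_of_nonneg_left hSb hμb.le]
  -- final numeric combination
  have hpow : μ ^ (k - 1) = μ ^ (2 * D) := by congr 1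
  have hμν : μ + ν ≥ 2 / ((k : ℝ) * μ ^ (2 * D)) := by
    rw [ge_iff_le, div_le_iff₀ (by positivity)]
    rw [hpow] at hgap3
    have : μ + ν = μ - b := by rw [hb]; ring
    rw [this]
    linarith [hgap3]
  have hklt : (k : ℝ) < 2 * n := by
    have : k < 2 * n := by omega
    exact_mod_cast this
  have hstep : 2 / ((k : ℝ) * μ ^ (2 * D)) > 1 / (μ ^ (2 * D) * n) := by
    rw [gt_iff_lt, div_lt_div_iff₀ (by positivity) (by positivity)]
    have hn0 : (0 : ℝ) < (n : ℝ) := by positivity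
    nlinarith [pow_pos hμpos (2 * D), hklt]
  have hgoal2 : μ + ν > 1 / (μ ^ (2 * D) * n) := lt_of_lt_of_le hstep hμν
  linarith [hlemA, hgoal2]
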